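/- Suppose Conditional No Anticipation holds. Then the combined event satisfies the single-event no-anticipation property: for every g ∈ {2,…,T} with P(G=g) > 0 and every t with 1 ≤ t < g, E[Y_t(g) | X, G=g] = E[Y_t(0,0) | X, G=g] almost surely. -/

import Mathlib

/- Two-event staggered Difference-in-Differences setup (Callaway–Sant'Anna with a
confounding event).  Cohorts take values in `{2,…,T} ∪ {∞} ⊆ ℕ∞`; the potential-outcome
index `0 : ℕ∞` codes "never treated by that event". -/

open MeasureTheory ProbabilityTheory

noncomputable section

namespace TwoEventDiD

variable {Ω : Type*} [MeasurableSpace Ω]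

/-- Expectation of `Z` conditional on the event `A`: `E[Z | A]`. -/
def cE (μ : Measure Ω) (A : Set Ω) (Z : Ω → ℝ) : ℝ := ∫ ω, Z ω ∂(μ[|A])

/-- Probability of `B` conditional on the event `A`: `P(B | A)`. -/
def cP (μ : Measure Ω) (A B : Set Ω) : ℝ := (μ[|A] B).toReal

/-- `g` lies in `{2,…,T} ∪ {∞}`. -/
def InCohort (T : ℕ) (g : ℕ∞) : Prop := g = ⊤ ∨ ((2 : ℕ∞) ≤ g ∧ g ≤ (T : ℕ∞))

/-- Realized outcome `Y_t := Y_t(G¹,G²)`. -/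
def Yr (G1 G2 : Ω → ℕ∞) (Y : ℕ → ℕ∞ → ℕ∞ → Ω → ℝ) (t : ℕ) : Ω → ℝ :=
  fun ω => Y t (G1 ω) (G2 ω) ω

/-- Double-group-time average treatment effect
`ATT(g¹,g²,t) = E[Y_t(g¹,g²) − Y_t(0,0) | G¹=g¹, G²=g²]`. -/
def ATT (μ : Measure Ω) (G1 G2 : Ω → ℕ∞) (Y : ℕ → ℕ∞ → ℕ∞ → Ω → ℝ)
    (g1 g2 : ℕ∞) (t : ℕ) : ℝ :=
  cE μ {ω | G1 ω = g1 ∧ G2 ω = g2} fun ω => Y t g1 g2 ω - Y t 0 0 ω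

/-- Target (event-1) treatment effect
`ATT¹(g¹,g²,t) = E[Y_t(g¹,0) − Y_t(0,0) | G¹=g¹, G²=g²]`. -/
def ATT1 (μ : Measure Ω) (G1 G2 : Ω → ℕ∞) (Y : ℕ → ℕ∞ → ℕ∞ → Ω → ℝ)
    (g1 g2 : ℕ∞) (t : ℕ) : ℝ :=
  cE μ {ω | G1 ω = g1 ∧ G2 ω = g2} fun ω => Y t g1 0 ω - Y t 0 0 ω

/-- Confounding (event-2) treatment effect
`ATT²(g¹,g²,t) = E[Y_t(0,g²) − Y_t(0,0) | G¹=g¹, G²=g²]`. -/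
def ATT2 (μ : Measure Ω) (G1 G2 : Ω → ℕ∞) (Y : ℕ → ℕ∞ → ℕ∞ → Ω → ℝ)
    (g1 g2 : ℕ∞) (t : ℕ) : ℝ :=
  cE μ {ω | G1 ω = g1 ∧ G2 ω = g2} fun ω => Y t 0 g2 ω - Y t 0 0 ω

/-- No Anticipation (unconditional version): before `max(g¹,g²)` the mean outcome of
cohort `(g¹,g²)` coincides with the appropriate less-treated potential outcome. -/
def NoAnticipation (μ : Measure Ω) (G1 G2 : Ω → ℕ∞) (Y : ℕ → ℕ∞ → ℕ∞ → Ω → ℝ)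
    (T : ℕ) : Prop :=
  ∀ g1 g2 : ℕ∞, InCohort T g1 → InCohort T g2 →
    0 < μ {ω | G1 ω = g1 ∧ G2 ω = g2} →
    ∀ t : ℕ, 1 ≤ t → (t : ℕ∞) < max g1 g2 →
      ((t : ℕ∞) < min g1 g2 →
        cE μ {ω | G1 ω = g1 ∧ G2 ω = g2} (Y t g1 g2)
          = cE μ {ω | G1 ω = g1 ∧ G2 ω = g2} (Y t 0 0)) ∧
      (g1 ≤ (t : ℕ∞) ∧ (t : ℕ∞) < g2 →
        cE μ {ω | G1 ω = g1 ∧ G2 ω = g2} (Y t g1 g2)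
          = cE μ {ω | G1 ω = g1 ∧ G2 ω = g2} (Y t g1 0)) ∧
      (g2 ≤ (t : ℕ∞) ∧ (t : ℕ∞) < g1 →
        cE μ {ω | G1 ω = g1 ∧ G2 ω = g2} (Y t g1 g2)
          = cE μ {ω | G1 ω = g1 ∧ G2 ω = g2} (Y t 0 g2))


/-- The σ-algebra `σ(X)` generated by the covariates. -/
def mX {K : ℕ} (X : Ω → Fin K → ℝ) : MeasurableSpace Ω :=
  MeasurableSpace.comap X inferInstance

/-- Conditional No Anticipation (conditional on covariates `X`). -/
def CondNoAnticipation (μ : Measure Ω) (G1 G2 : Ω → ℕ∞) (Y : ℕ → ℕ∞ → ℕ∞ → Ω → ℝ)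
    (T : ℕ) {K : ℕ} (X : Ω → Fin K → ℝ) : Prop :=
  ∀ g1 g2 : ℕ∞, InCohort T g1 → InCohort T g2 →
    0 < μ {ω | G1 ω = g1 ∧ G2 ω = g2} →
    ∀ t : ℕ, 1 ≤ t → (t : ℕ∞) < max g1 g2 →
      ((t : ℕ∞) < min g1 g2 →
        (μ[|{ω | G1 ω = g1 ∧ G2 ω = g2}])[Y t g1 g2 | mX X]
          =ᵐ[μ[|{ω | G1 ω = g1 ∧ G2 ω = g2}]]
        (μ[|{ω | G1 ω = g1 ∧ G2 ω = g2}])[Y t 0 0 | mX X]) ∧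
      (g1 ≤ (t : ℕ∞) ∧ (t : ℕ∞) < g2 →
        (μ[|{ω | G1 ω = g1 ∧ G2 ω = g2}])[Y t g1 g2 | mX X]
          =ᵐ[μ[|{ω | G1 ω = g1 ∧ G2 ω = g2}]]
        (μ[|{ω | G1 ω = g1 ∧ G2 ω = g2}])[Y t g1 0 | mX X]) ∧
      (g2 ≤ (t : ℕ∞) ∧ (t : ℕ∞) < g1 →
        (μ[|{ω | G1 ω = g1 ∧ G2 ω = g2}])[Y t g1 g2 | mX X]
          =ᵐ[μ[|{ω | G1 ω = g1 ∧ G2 ω = g2}]]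
        (μ[|{ω | G1 ω = g1 ∧ G2 ω = g2}])[Y t 0 g2 | mX X])

/-- Conditional parallel trends with respect to the never-treated: a common measurable
function of the covariates is a version of both conditional mean untreated trends. -/
def CondPTNever (μ : Measure Ω) (G1 G2 : Ω → ℕ∞) (Y : ℕ → ℕ∞ → ℕ∞ → Ω → ℝ)
    (T : ℕ) {K : ℕ} (X : Ω → Fin K → ℝ) : Prop :=
  ∀ g1 g2 : ℕ∞, InCohort T g1 → InCohort T g2 → ¬(g1 = ⊤ ∧ g2 = ⊤) →
    0 < μ {ω | G1 ω = g1 ∧ G2 ω = g2} →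
    0 < μ {ω | G1 ω = ⊤ ∧ G2 ω = ⊤} →
    ∀ t : ℕ, min g1 g2 ≤ (t : ℕ∞) → t ≤ T →
      ∃ h : (Fin K → ℝ) → ℝ, Measurable h ∧
        (fun ω => h (X ω))
          =ᵐ[μ[|{ω | G1 ω = g1 ∧ G2 ω = g2}]]
          (μ[|{ω | G1 ω = g1 ∧ G2 ω = g2}])[fun ω => Y t 0 0 ω - Y (t - 1) 0 0 ω | mX X] ∧
        (fun ω => h (X ω))
          =ᵐ[μ[|{ω | G1 ω = ⊤ ∧ G2 ω = ⊤}]]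
          (μ[|{ω | G1 ω = ⊤ ∧ G2 ω = ⊤}])[fun ω => Y t 0 0 ω - Y (t - 1) 0 0 ω | mX X]

/-- Conditional parallel trends with respect to the not-yet-treated. -/
def CondPTNyt (μ : Measure Ω) (G1 G2 : Ω → ℕ∞) (Y : ℕ → ℕ∞ → ℕ∞ → Ω → ℝ)
    (T : ℕ) {K : ℕ} (X : Ω → Fin K → ℝ) : Prop :=
  ∀ g1 g2 : ℕ∞, InCohort T g1 → InCohort T g2 → ¬(g1 = ⊤ ∧ g2 = ⊤) →
    0 < μ {ω | G1 ω = g1 ∧ G2 ω = g2} →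
    ∀ s t : ℕ, min g1 g2 ≤ (t : ℕ∞) → t ≤ s → s ≤ T →
      0 < μ {ω | ¬ G1 ω ≤ (s : ℕ∞) ∧ ¬ G2 ω ≤ (s : ℕ∞) ∧ G1 ω ≠ g1 ∧ G2 ω ≠ g2} →
      ∃ h : (Fin K → ℝ) → ℝ, Measurable h ∧
        (fun ω => h (X ω))
          =ᵐ[μ[|{ω | G1 ω = g1 ∧ G2 ω = g2}]]
          (μ[|{ω | G1 ω = g1 ∧ G2 ω = g2}])[fun ω => Y t 0 0 ω - Y (t - 1) 0 0 ω | mX X] ∧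
        (fun ω => h (X ω))
          =ᵐ[μ[|{ω | ¬ G1 ω ≤ (s : ℕ∞) ∧ ¬ G2 ω ≤ (s : ℕ∞) ∧ G1 ω ≠ g1 ∧ G2 ω ≠ g2}]]
          (μ[|{ω | ¬ G1 ω ≤ (s : ℕ∞) ∧ ¬ G2 ω ≤ (s : ℕ∞) ∧ G1 ω ≠ g1 ∧ G2 ω ≠ g2}])[
            fun ω => Y t 0 0 ω - Y (t - 1) 0 0 ω | mX X]

end TwoEventDiD

open TwoEventDiD

/-- Helper: set integral with respect to a conditional measure. -/
lemma setIntegral_cond_aux {Ω : Type*} [MeasurableSpace Ω] (μ : Measure Ω) {A s : Set Ω}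
    (hs : MeasurableSet s) (f : Ω → ℝ) :
    ∫ ω in s, f ω ∂(μ[|A]) = ((μ A)⁻¹).toReal * ∫ ω in s ∩ A, f ω ∂μ := by
  have h : (μ[|A]).restrict s = (μ A)⁻¹ • μ.restrict (s ∩ A) := by
    rw [ProbabilityTheory.cond, Measure.restrict_smul, Measure.restrict_restrict hs]
  rw [show (∫ ω in s, f ω ∂(μ[|A])) = ∫ ω, f ω ∂((μ[|A]).restrict s) from rfl, h,
    integral_smul_measure, smul_eq_mul]

/-- Helper: integrability passes to a conditional measure. -/
lemma integrable_cond_aux {Ω : Type*} [MeasurableSpace Ω] {μ : Measure Ω} {A : Set Ω}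
    (hA0 : μ A ≠ 0) {f : Ω → ℝ} (hf : Integrable f μ) : Integrable f (μ[|A]) := by
  rw [ProbabilityTheory.cond]
  exact (hf.restrict (s := A)).smul_measure (ENNReal.inv_ne_top.mpr hA0)

/-- Lemma 1, part CS3: conditional no anticipation for the two events
implies single-event no anticipation for the combined event `G = min(G¹,G²)`. -/
theorem combined_event_no_anticipation
    {Ω : Type*} [MeasurableSpace Ω] (μ : Measure Ω) [IsProbabilityMeasure μ]
    (T : ℕ) (hT : 2 ≤ T)
    (G1 G2 : Ω → ℕ∞) (Y : ℕ → ℕ∞ → ℕ∞ → Ω → ℝ)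
    (hG1mem : ∀ ω, InCohort T (G1 ω)) (hG2mem : ∀ ω, InCohort T (G2 ω))
    (hmG1 : ∀ g : ℕ∞, MeasurableSet {ω | G1 ω = g})
    (hmG2 : ∀ g : ℕ∞, MeasurableSet {ω | G2 ω = g})
    (hYint : ∀ (t : ℕ) (g1 g2 : ℕ∞), Integrable (Y t g1 g2) μ)
    (hYtop1 : ∀ (t : ℕ) (g2 : ℕ∞), Y t ⊤ g2 = Y t 0 g2)
    (hYtop2 : ∀ (t : ℕ) (g1 : ℕ∞), Y t g1 ⊤ = Y t g1 0)
    {K : ℕ} (X : Ω → Fin K → ℝ) (hX : Measurable X)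
    (hNA : CondNoAnticipation μ G1 G2 Y T X) :
    ∀ g : ℕ, 2 ≤ g → g ≤ T →
      0 < μ {ω | min (G1 ω) (G2 ω) = (g : ℕ∞)} →
      ∀ t : ℕ, 1 ≤ t → t < g →
        (μ[|{ω | min (G1 ω) (G2 ω) = (g : ℕ∞)}])[
            (fun ω => if min (G1 ω) (G2 ω) = (g : ℕ∞) then Y t (G1 ω) (G2 ω) ω
                      else Y t (g : ℕ∞) (g : ℕ∞) ω) | mX X]
          =ᵐ[μ[|{ω | min (G1 ω) (G2 ω) = (g : ℕ∞)}]]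
        (μ[|{ω | min (G1 ω) (G2 ω) = (g : ℕ∞)}])[Y t 0 0 | mX X] := by
  classical
  intro g hg2 hgT hApos t ht1 htg
  have hm : mX X ≤ ‹MeasurableSpace Ω› := by
    intro s hs
    obtain ⟨u, hu, rfl⟩ := hs
    exact hX hu
  set A : Set Ω := {ω | min (G1 ω) (G2 ω) = (g : ℕ∞)} with hAdef
  set ν := μ[|A] with hνdef
  have hApm : ∀ p : ℕ∞ × ℕ∞, MeasurableSet {ω | G1 ω = p.1 ∧ G2 ω = p.2} := fun p =>
    (hmG1 p.1).inter (hmG2 p.2)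
  have hAm : MeasurableSet A := by
    have hrepr : A = ⋃ p : ℕ∞ × ℕ∞, ⋃ _ : min p.1 p.2 = (g : ℕ∞),
        {ω | G1 ω = p.1 ∧ G2 ω = p.2} := by
      ext ω
      simp only [hAdef, Set.mem_iUnion, Set.mem_setOf_eq]
      constructor
      · intro h; exact ⟨(G1 ω, G2 ω), h, rfl, rfl⟩
      · rintro ⟨p, hp, h1, h2⟩; rw [← h1, ← h2] at hp; exact hp
    rw [hrepr]
    exact MeasurableSet.iUnion fun p => MeasurableSet.iUnion fun _ => hApm p
  have hA0 : μ A ≠ 0 := hApos.ne'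
  haveI : IsProbabilityMeasure ν := ProbabilityTheory.cond_isProbabilityMeasure hA0
  -- the finite set of possible cohort values
  set S : Finset ℕ∞ := insert ⊤ ((Finset.Icc 2 T).image (fun k : ℕ => (k : ℕ∞))) with hSdef
  have hSmem : ∀ x : ℕ∞, InCohort T x → x ∈ S := by
    intro x hx
    rcases hx with rfl | ⟨h2, hxT⟩
    · exact Finset.mem_insert_self _ _
    · have hxt : x ≠ ⊤ := by
        intro h; rw [h, top_le_iff] at hxT; exact ENat.coe_ne_top T hxT
      lift x to ℕ using hxt with k
      refine Finset.mem_insert_of_mem (Finset.mem_image.mpr ⟨k, ?_, rfl⟩)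
      rw [Finset.mem_Icc]
      exact ⟨by exact_mod_cast h2, by exact_mod_cast hxT⟩
  have hSIn : ∀ x ∈ S, InCohort T x := by
    intro x hx
    rcases Finset.mem_insert.mp hx with rfl | hx
    · exact Or.inl rfl
    · obtain ⟨k, hk, rfl⟩ := Finset.mem_image.mp hx
      rw [Finset.mem_Icc] at hk
      exact Or.inr ⟨by exact_mod_cast hk.1, by exact_mod_cast hk.2⟩
  -- pointwise decomposition of any family over the cohort cells
  have hdecomp : ∀ (F : ℕ∞ × ℕ∞ → Ω → ℝ) (ω : Ω),
      (∑ p ∈ S ×ˢ S, Set.indicator {ω' | G1 ω' = p.1 ∧ G2 ω' = p.2} (F p) ω)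
        = F (G1 ω, G2 ω) ω := by
    intro F ω
    rw [Finset.sum_eq_single (G1 ω, G2 ω)]
    · refine Set.indicator_of_mem ?_ (F (G1 ω, G2 ω))
      exact Set.mem_setOf_eq ▸ ⟨rfl, rfl⟩
    · intro p _ hne
      refine Set.indicator_of_notMem (fun hmem => hne ?_) _
      obtain ⟨h1, h2⟩ := hmem
      exact Prod.ext_iff.mpr ⟨h1.symm, h2.symm⟩
    · intro hnot
      exact absurd (Finset.mem_product.mpr ⟨hSmem _ (hG1mem ω), hSmem _ (hG2mem ω)⟩) hnot
  set W : Ω → ℝ := fun ω => ∑ p ∈ S ×ˢ S,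
    Set.indicator {ω' | G1 ω' = p.1 ∧ G2 ω' = p.2} (Y t p.1 p.2) ω with hWdef
  have hWeq : ∀ ω, W ω = Y t (G1 ω) (G2 ω) ω := fun ω =>
    hdecomp (fun p => Y t p.1 p.2) ω
  have hWint : Integrable W μ :=
    integrable_finset_sum _ fun p _ => ((hYint t p.1 p.2).indicator (hApm p))
  -- the realized outcome coincides a.e. [ν] with W
  have hAc : ∀ᵐ ω ∂ν, ω ∈ A := by
    rw [ae_iff]
    have hcompl : {ω | ¬ ω ∈ A} = Aᶜ := rfl
    rw [hcompl, hνdef, ProbabilityTheory.cond_apply hAm]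
    simp
  have hZ1W : (fun ω => if min (G1 ω) (G2 ω) = (g : ℕ∞) then Y t (G1 ω) (G2 ω) ω
      else Y t (g : ℕ∞) (g : ℕ∞) ω) =ᵐ[ν] W := by
    filter_upwards [hAc] with ω hω
    have hω' : min (G1 ω) (G2 ω) = (g : ℕ∞) := hω
    rw [if_pos hω', hWeq ω]
  -- key set-integral identity
  have hKey : ∀ s : Set Ω, MeasurableSet[mX X] s →
      ∫ ω in s, Y t 0 0 ω ∂ν = ∫ ω in s, W ω ∂ν := by
    intro s hs
    have hsm : MeasurableSet s := hm s hs
    rw [hνdef, setIntegral_cond_aux μ hsm, setIntegral_cond_aux μ hsm]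
    congr 1
    -- now both integrals over s ∩ A wrt μ
    set B : Set Ω := s ∩ A with hBdef
    have hBm : MeasurableSet B := hsm.inter hAm
    have hterm : ∀ p ∈ S ×ˢ S,
        ∫ ω in B ∩ {ω' | G1 ω' = p.1 ∧ G2 ω' = p.2}, Y t 0 0 ω ∂μ
          = ∫ ω in B ∩ {ω' | G1 ω' = p.1 ∧ G2 ω' = p.2}, Y t p.1 p.2 ω ∂μ := by
      intro p hp
      set Ap : Set Ω := {ω' | G1 ω' = p.1 ∧ G2 ω' = p.2} with hApdef
      by_cases hpg : min p.1 p.2 = (g : ℕ∞)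
      · by_cases h0 : μ Ap = 0
        · have hnull : μ (B ∩ Ap) = 0 := measure_mono_null Set.inter_subset_right h0
          rw [Measure.restrict_eq_zero.mpr hnull]
          simp
        · have hpos : 0 < μ Ap := pos_iff_ne_zero.mpr h0
          have hp1 := hSIn p.1 (Finset.mem_product.mp hp).1
          have hp2 := hSIn p.2 (Finset.mem_product.mp hp).2
          have htmin : (t : ℕ∞) < min p.1 p.2 := by
            rw [hpg]; exact_mod_cast htg
          have hmax : (t : ℕ∞) < max p.1 p.2 := htmin.trans_le min_le_max
          have hcna := (hNA p.1 p.2 hp1 hp2 hpos t ht1 hmax).1 htmin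
          haveI : IsProbabilityMeasure (μ[|Ap]) :=
            ProbabilityTheory.cond_isProbabilityMeasure h0
          have h1 : ∫ ω in s, Y t p.1 p.2 ω ∂(μ[|Ap]) = ∫ ω in s, Y t 0 0 ω ∂(μ[|Ap]) := by
            rw [← setIntegral_condExp hm (integrable_cond_aux h0 (hYint t p.1 p.2)) hs,
              ← setIntegral_condExp hm (integrable_cond_aux h0 (hYint t 0 0)) hs]
            exact integral_congr_ae (ae_restrict_of_ae hcna)
          rw [setIntegral_cond_aux μ hsm, setIntegral_cond_aux μ hsm] at h1
          have hBA : B ∩ Ap = s ∩ Ap := by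
            ext ω
            simp only [hBdef, hApdef, Set.mem_inter_iff, Set.mem_setOf_eq, hAdef]
            constructor
            · rintro ⟨⟨hωs, _⟩, hω1, hω2⟩; exact ⟨hωs, hω1, hω2⟩
            · rintro ⟨hωs, hω1, hω2⟩
              exact ⟨⟨hωs, by rw [hω1, hω2]; exact hpg⟩, hω1, hω2⟩
          have hcne : ((μ Ap)⁻¹).toReal ≠ 0 :=
            ENNReal.toReal_ne_zero.mpr
              ⟨ENNReal.inv_ne_zero.mpr (measure_ne_top μ Ap), ENNReal.inv_ne_top.mpr h0⟩
          rw [hBA]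
          exact (mul_left_cancel₀ hcne h1).symm
      · have hempty : B ∩ Ap = ∅ := by
          ext ω
          simp only [hBdef, hApdef, Set.mem_inter_iff, Set.mem_setOf_eq, hAdef,
            Set.mem_empty_iff_false, iff_false, not_and]
          rintro ⟨_, hωA⟩ hω1 hω2
          rw [hω1, hω2] at hωA
          exact hpg hωA
        rw [hempty]
        simp
    -- decompose both integrals over B
    have hY00 : Y t 0 0 = fun ω => ∑ p ∈ S ×ˢ S,
        Set.indicator {ω' | G1 ω' = p.1 ∧ G2 ω' = p.2} (Y t 0 0) ω :=
      funext fun ω => (hdecomp (fun _ => Y t 0 0) ω).symm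
    calc ∫ ω in B, Y t 0 0 ω ∂μ
        = ∑ p ∈ S ×ˢ S, ∫ ω in B,
            Set.indicator {ω' | G1 ω' = p.1 ∧ G2 ω' = p.2} (Y t 0 0) ω ∂μ := by
          rw [show (∫ ω in B, Y t 0 0 ω ∂μ) = ∫ ω in B, (fun ω => ∑ p ∈ S ×ˢ S,
              Set.indicator {ω' | G1 ω' = p.1 ∧ G2 ω' = p.2} (Y t 0 0) ω) ω ∂μ from by
            rw [← hY00]]
          exact integral_finset_sum _ fun p _ =>
            ((hYint t 0 0).indicator (hApm p)).restrict
      _ = ∑ p ∈ S ×ˢ S, ∫ ω in B ∩ {ω' | G1 ω' = p.1 ∧ G2 ω' = p.2}, Y t 0 0 ω ∂μ := by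
          exact Finset.sum_congr rfl fun p _ => setIntegral_indicator (hApm p)
      _ = ∑ p ∈ S ×ˢ S, ∫ ω in B ∩ {ω' | G1 ω' = p.1 ∧ G2 ω' = p.2},
            Y t p.1 p.2 ω ∂μ := Finset.sum_congr rfl hterm
      _ = ∑ p ∈ S ×ˢ S, ∫ ω in B,
            Set.indicator {ω' | G1 ω' = p.1 ∧ G2 ω' = p.2} (Y t p.1 p.2) ω ∂μ := by
          exact Finset.sum_congr rfl fun p _ => (setIntegral_indicator (hApm p)).symm
      _ = ∫ ω in B, W ω ∂μ := by
          rw [hWdef]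
          exact (integral_finset_sum _ fun p _ =>
            ((hYint t p.1 p.2).indicator (hApm p)).restrict).symm
  -- conclude via uniqueness of conditional expectation
  have hmain : ν[Y t 0 0|mX X] =ᵐ[ν] ν[W|mX X] := by
    refine ae_eq_condExp_of_forall_setIntegral_eq hm (integrable_cond_aux hA0 hWint)
      (fun s _ _ => integrable_condExp.integrableOn) (fun s hs _ => ?_)
      (stronglyMeasurable_condExp.aestronglyMeasurable)
    rw [setIntegral_condExp hm (integrable_cond_aux hA0 (hYint t 0 0)) hs]
    exact hKey s hs
  exact (condExp_congr_ae hZ1W).trans hmain.symm
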